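/- Let f be C_f-Lipschitz in y and g be μ-strongly convex in y with minimizer y*(x) of g(x,·), and let y*_λ(x) minimize f(x,·) + λ g(x,·). Then ‖y*_λ(x) − y*(x)‖ ≤ C_f/(λμ) for every x and every λ > 0. -/

import Mathlib

/-- Let `f` be `C_f`-Lipschitz in `y` (gradient bounded by `C_f`) and `g`
be `μ`-strongly convex in `y` (so its gradient is `μ`-strongly monotone) with minimizer
`y*(x)` of `g(x,·)`, and let `y*_λ(x)` minimize `f(x,·) + λ g(x,·)`. Then
`‖y*_λ(x) − y*(x)‖ ≤ C_f/(λμ)` for every `x` and every `λ > 0`. -/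
theorem penalized_optimum_distance_bound
    {dx dy : ℕ}
    (f g : EuclideanSpace ℝ (Fin dx) → EuclideanSpace ℝ (Fin dy) → ℝ)
    (Cf μ : ℝ) (hCf : 0 ≤ Cf) (hμ : 0 < μ)
    (hfdiff : ∀ x, Differentiable ℝ (f x))
    (hgdiff : ∀ x, Differentiable ℝ (g x))
    (hfgrad : ∀ x y, ‖gradient (f x) y‖ ≤ Cf)
    (hmono : ∀ x y₁ y₂, μ * ‖y₁ - y₂‖ ≤ ‖gradient (g x) y₁ - gradient (g x) y₂‖)
    (ystar : EuclideanSpace ℝ (Fin dx) → EuclideanSpace ℝ (Fin dy))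
    (ystarl : ℝ → EuclideanSpace ℝ (Fin dx) → EuclideanSpace ℝ (Fin dy))
    (hystar : ∀ x, gradient (g x) (ystar x) = 0)
    (hystarl : ∀ (lam : ℝ) (x),
      gradient (fun y => f x y + lam * g x y) (ystarl lam x) = 0) :
    ∀ (x) (lam : ℝ), 0 < lam → ‖ystarl lam x - ystar x‖ ≤ Cf / (lam * μ) := by
  intro x lam hlam
  set yl := ystarl lam x with hyl
  -- gradient of the penalized objective is the sum of gradients
  have h1 : HasGradientAt (fun y => f x y + lam * g x y)
      (gradient (f x) yl + lam • gradient (g x) yl) yl := by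
    rw [hasGradientAt_iff_hasFDerivAt]
    have hsum := ((hfdiff x yl).hasFDerivAt).add
      (((hgdiff x yl).hasFDerivAt).const_mul lam)
    convert hsum using 1
    any_goals rfl
    simp [gradient, LinearIsometryEquiv.apply_symm_apply]
  have h2 : gradient (f x) yl + lam • gradient (g x) yl = 0 := by
    rw [← h1.gradient]; exact hystarl lam x
  have h3 : lam • gradient (g x) yl = -gradient (f x) yl := by
    have := h2; linear_combination (norm := module) this
  have key : lam * μ * ‖yl - ystar x‖ ≤ Cf := by
    calc lam * μ * ‖yl - ystar x‖ = lam * (μ * ‖yl - ystar x‖) := by ring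
    _ ≤ lam * ‖gradient (g x) yl - gradient (g x) (ystar x)‖ := by
        exact mul_le_mul_of_nonneg_left (hmono x yl (ystar x)) hlam.le
    _ = ‖lam • gradient (g x) yl‖ := by
        rw [hystar x, sub_zero, norm_smul, Real.norm_eq_abs, abs_of_pos hlam]
    _ = ‖gradient (f x) yl‖ := by rw [h3, norm_neg]
    _ ≤ Cf := hfgrad x yl
  have hpos : 0 < lam * μ := by positivity
  rw [le_div_iff₀ hpos]
  linarith [key]
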